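/- Let K be a commutative ring and A a nonunital associative K-algebra. Let U be the quotient of the tensor algebra Tens_K(A ⊕ A) by the two-sided ideal generated by the elements r_a·r_b − r_{ab}, l_a·r_b − r_b·l_a, and l_{ab} − l_b·l_a for all a, b ∈ A, where l_a (resp. r_a) denotes the image in the tensor algebra of (a,0) (resp. (0,a)). Let A₊ denote the unitization of A, the unital associative K-algebra K ⊕ A with product (p,a)(q,b) = (pq, pb + qa + ab). Then there is an isomorphism of unital K-algebras U ≅ (A₊)ᵒᵖ ⊗_K A₊ carrying the class of l_a to aᵒᵖ ⊗ 1 and the class of r_b to 1 ⊗ b. -/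

import Mathlib

noncomputable section

open scoped TensorProduct

/-- `l_a ∈ Tens_K(A ⊕ A)`. -/
def lT (K A : Type) [CommRing K] [NonUnitalRing A] [Module K A] (a : A) :
    TensorAlgebra K (A × A) :=
  TensorAlgebra.ι K (a, 0)

/-- `r_a ∈ Tens_K(A ⊕ A)`. -/
def rT (K A : Type) [CommRing K] [NonUnitalRing A] [Module K A] (a : A) :
    TensorAlgebra K (A × A) :=
  TensorAlgebra.ι K (0, a)

/-- The relations defining the universal enveloping algebra of an associative algebra:
quotienting by this relation is the same as quotienting by the two-sided ideal generated
by `r_a·r_b − r_{ab}`, `l_a·r_b − r_b·l_a`, `l_{ab} − l_b·l_a`. -/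
inductive AssRel (K A : Type) [CommRing K] [NonUnitalRing A] [Module K A] :
    TensorAlgebra K (A × A) → TensorAlgebra K (A × A) → Prop
  | rr (a b : A) : AssRel K A (rT K A a * rT K A b) (rT K A (a * b))
  | lr (a b : A) : AssRel K A (lT K A a * rT K A b) (rT K A b * lT K A a)
  | ll (a b : A) : AssRel K A (lT K A (a * b)) (lT K A b * lT K A a)

section Aux

variable (K A : Type) [CommRing K] [NonUnitalRing A] [Module K A]
  [IsScalarTower K A A] [SMulCommClass K A A]

open MulOpposite Unitization

lemma lT_add (a a' : A) : lT K A (a + a') = lT K A a + lT K A a' := by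
  rw [lT, lT, lT, show ((a + a' : A), (0 : A)) = (a, 0) + (a', 0) by simp, map_add]

lemma lT_smul (k : K) (a : A) : lT K A (k • a) = k • lT K A a := by
  rw [lT, lT, show ((k • a : A), (0 : A)) = k • (a, 0) by simp, map_smul]

lemma lT_zero : lT K A 0 = 0 := by
  rw [lT, show ((0 : A), (0 : A)) = (0 : A × A) from rfl, map_zero]

lemma rT_add (b b' : A) : rT K A (b + b') = rT K A b + rT K A b' := by
  rw [rT, rT, rT, show ((0 : A), (b + b' : A)) = (0, b) + (0, b') by simp, map_add]

lemma rT_smul (k : K) (b : A) : rT K A (k • b) = k • rT K A b := by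
  rw [rT, rT, show ((0 : A), (k • b : A)) = k • (0, b) by simp, map_smul]

lemma rT_zero : rT K A 0 = 0 := by
  rw [rT, show ((0 : A), (0 : A)) = (0 : A × A) from rfl, map_zero]

/-- The linear map `(a,b) ↦ aᵒᵖ ⊗ 1 + 1 ⊗ b`. -/
def fLin : A × A →ₗ[K] (Unitization K A)ᵐᵒᵖ ⊗[K] Unitization K A where
  toFun p := op (p.1 : Unitization K A) ⊗ₜ[K] 1 + 1 ⊗ₜ[K] (p.2 : Unitization K A)
  map_add' p q := by
    simp only [Prod.fst_add, Prod.snd_add, Unitization.inr_add, op_add,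
      TensorProduct.add_tmul, TensorProduct.tmul_add]
    rw [add_add_add_comm]
  map_smul' k p := by
    simp only [Prod.smul_fst, Prod.smul_snd, Unitization.inr_smul, op_smul,
      TensorProduct.smul_tmul', TensorProduct.tmul_smul, smul_add, RingHom.id_apply]

/-- The forward algebra map on the tensor algebra. -/
def Fmap : TensorAlgebra K (A × A) →ₐ[K] (Unitization K A)ᵐᵒᵖ ⊗[K] Unitization K A :=
  TensorAlgebra.lift K (fLin K A)

lemma Fmap_l (a : A) : Fmap K A (lT K A a) = op (a : Unitization K A) ⊗ₜ[K] 1 := by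
  simp [Fmap, lT, fLin]

lemma Fmap_r (b : A) : Fmap K A (rT K A b) = 1 ⊗ₜ[K] (b : Unitization K A) := by
  simp [Fmap, rT, fLin]

lemma Fmap_rel : ∀ ⦃x y : TensorAlgebra K (A × A)⦄, AssRel K A x y → Fmap K A x = Fmap K A y := by
  intro x y h
  induction h with
  | rr a b =>
      simp only [map_mul, Fmap_r, Algebra.TensorProduct.tmul_mul_tmul, one_mul,
        Unitization.inr_mul]
  | lr a b =>
      simp only [map_mul, Fmap_l, Fmap_r, Algebra.TensorProduct.tmul_mul_tmul, one_mul, mul_one]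
  | ll a b =>
      simp only [map_mul, Fmap_l, Algebra.TensorProduct.tmul_mul_tmul, one_mul,
        ← op_mul, ← Unitization.inr_mul]

/-- The forward map on the quotient. -/
def F : RingQuot (AssRel K A) →ₐ[K] (Unitization K A)ᵐᵒᵖ ⊗[K] Unitization K A :=
  RingQuot.liftAlgHom K ⟨Fmap K A, Fmap_rel K A⟩

lemma F_l (a : A) :
    F K A (RingQuot.mkAlgHom K (AssRel K A) (lT K A a)) = op (a : Unitization K A) ⊗ₜ[K] 1 := by
  rw [F, RingQuot.liftAlgHom_mkAlgHom_apply, Fmap_l]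

lemma F_r (b : A) :
    F K A (RingQuot.mkAlgHom K (AssRel K A) (rT K A b)) = 1 ⊗ₜ[K] (b : Unitization K A) := by
  rw [F, RingQuot.liftAlgHom_mkAlgHom_apply, Fmap_r]

/-- `a ↦ [r_a]` as a nonunital algebra hom. -/
def rHom : A →ₙₐ[K] RingQuot (AssRel K A) where
  toFun b := RingQuot.mkAlgHom K (AssRel K A) (rT K A b)
  map_add' b b' := by rw [rT_add, map_add]
  map_smul' k b := by rw [rT_smul, map_smul]; rfl
  map_zero' := by rw [rT_zero, map_zero]
  map_mul' a b := by
    rw [← RingQuot.mkAlgHom_rel K (AssRel.rr a b), map_mul]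

/-- `a ↦ op [l_a]` as a nonunital algebra hom into the opposite. -/
def lHom : A →ₙₐ[K] (RingQuot (AssRel K A))ᵐᵒᵖ where
  toFun a := op (RingQuot.mkAlgHom K (AssRel K A) (lT K A a))
  map_add' a a' := by rw [lT_add, map_add, op_add]
  map_smul' k a := by rw [lT_smul, map_smul, op_smul]; rfl
  map_zero' := by rw [lT_zero, map_zero, op_zero]
  map_mul' a b := by
    rw [RingQuot.mkAlgHom_rel K (AssRel.ll a b), map_mul, op_mul]

/-- The map `(A₊)ᵐᵒᵖ → RingQuot`. -/
def G₁ : (Unitization K A)ᵐᵒᵖ →ₐ[K] RingQuot (AssRel K A) :=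
  AlgHom.opComm (Unitization.lift (lHom K A))

/-- The map `A₊ → RingQuot`. -/
def G₂ : Unitization K A →ₐ[K] RingQuot (AssRel K A) :=
  Unitization.lift (rHom K A)

lemma G₁_apply (a : A) :
    G₁ K A (op (a : Unitization K A)) = RingQuot.mkAlgHom K (AssRel K A) (lT K A a) := by
  simp [G₁, lHom]

lemma G₂_apply (b : A) :
    G₂ K A (b : Unitization K A) = RingQuot.mkAlgHom K (AssRel K A) (rT K A b) := by
  simp [G₂, rHom]

lemma G_comm : ∀ x y, Commute (G₁ K A x) (G₂ K A y) := by
  intro x y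
  induction x using MulOpposite.rec' with
  | h x =>
  induction x using Unitization.ind with
  | inl_add_inr k a =>
  induction y using Unitization.ind with
  | inl_add_inr k' b =>
  have hx : G₁ K A (op (Unitization.inl k + (a : Unitization K A))) =
      algebraMap K (RingQuot (AssRel K A)) k + G₁ K A (op (a : Unitization K A)) := by
    rw [op_add, map_add, ← Unitization.algebraMap_eq_inl, ← MulOpposite.algebraMap_apply,
      AlgHom.commutes]
  have hy : G₂ K A (Unitization.inl k' + (b : Unitization K A)) =
      algebraMap K (RingQuot (AssRel K A)) k' + G₂ K A (b : Unitization K A) := by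
    rw [map_add, ← Unitization.algebraMap_eq_inl, AlgHom.commutes]
  rw [hx, hy]
  apply Commute.add_left
  · apply Commute.add_right
    · exact Algebra.commute_algebraMap_left k _
    · exact Algebra.commute_algebraMap_left k _
  · apply Commute.add_right
    · exact (Algebra.commute_algebraMap_right k' _)
    · rw [G₁_apply, G₂_apply]
      show _ * _ = _ * _
      rw [← map_mul, ← map_mul]
      exact RingQuot.mkAlgHom_rel K (AssRel.lr a b)

/-- The inverse map. -/
def G : (Unitization K A)ᵐᵒᵖ ⊗[K] Unitization K A →ₐ[K] RingQuot (AssRel K A) :=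
  Algebra.TensorProduct.lift (G₁ K A) (G₂ K A) (G_comm K A)

lemma G_l (a : A) :
    G K A (op (a : Unitization K A) ⊗ₜ[K] 1) = RingQuot.mkAlgHom K (AssRel K A) (lT K A a) := by
  simp only [G, Algebra.TensorProduct.lift_tmul, map_one, mul_one, G₁_apply]

lemma G_r (b : A) :
    G K A ((1 : (Unitization K A)ᵐᵒᵖ) ⊗ₜ[K] (b : Unitization K A)) =
      RingQuot.mkAlgHom K (AssRel K A) (rT K A b) := by
  simp only [G, Algebra.TensorProduct.lift_tmul, map_one, one_mul, G₂_apply]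

end Aux

/-- The universal enveloping algebra of a nonunital associative `K`-algebra `A` is the
extended algebra `(A₊)ᵒᵖ ⊗_K A₊`, via `l_a ↦ aᵒᵖ ⊗ 1` and `r_b ↦ 1 ⊗ b`. -/
theorem uAss_iso (K A : Type) [CommRing K] [NonUnitalRing A] [Module K A]
    [IsScalarTower K A A] [SMulCommClass K A A] :
    ∃ e : RingQuot (AssRel K A) ≃ₐ[K] (Unitization K A)ᵐᵒᵖ ⊗[K] Unitization K A,
      (∀ a : A, e (RingQuot.mkAlgHom K (AssRel K A) (lT K A a)) =
        MulOpposite.op (a : Unitization K A) ⊗ₜ[K] 1) ∧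
      (∀ b : A, e (RingQuot.mkAlgHom K (AssRel K A) (rT K A b)) =
        1 ⊗ₜ[K] (b : Unitization K A)) := by
  have h1 : ∀ x : (Unitization K A)ᵐᵒᵖ, F K A (G K A (x ⊗ₜ[K] 1)) = x ⊗ₜ[K] 1 := by
    intro x
    induction x using MulOpposite.rec' with
    | h x =>
    induction x using Unitization.ind with
    | inl_add_inr k a =>
    rw [MulOpposite.op_add, TensorProduct.add_tmul, map_add, map_add]
    congr 1
    · rw [← Unitization.algebraMap_eq_inl, ← MulOpposite.algebraMap_apply,
        ← Algebra.TensorProduct.algebraMap_apply, AlgHom.commutes, AlgHom.commutes]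
    · rw [G_l, F_l]
  have h2 : ∀ y : Unitization K A,
      F K A (G K A ((1 : (Unitization K A)ᵐᵒᵖ) ⊗ₜ[K] y)) = 1 ⊗ₜ[K] y := by
    intro y
    induction y using Unitization.ind with
    | inl_add_inr k b =>
    rw [TensorProduct.tmul_add, map_add, map_add]
    congr 1
    · rw [← Unitization.algebraMap_eq_inl, ← Algebra.TensorProduct.algebraMap_apply',
        AlgHom.commutes, AlgHom.commutes]
    · rw [G_r, F_r]
  have hFG : (F K A).comp (G K A) = AlgHom.id K ((Unitization K A)ᵐᵒᵖ ⊗[K] Unitization K A) :=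
    Algebra.TensorProduct.ext
      (AlgHom.ext fun x => by simpa using h1 x)
      (AlgHom.ext fun y => by simpa using h2 y)
  have hGF : (G K A).comp (F K A) = AlgHom.id K (RingQuot (AssRel K A)) := by
    apply RingQuot.ringQuot_ext'
    apply TensorAlgebra.hom_ext
    apply LinearMap.ext
    intro p
    obtain ⟨a, b⟩ := p
    have hp : TensorAlgebra.ι K ((a, b) : A × A) = lT K A a + rT K A b := by
      rw [lT, rT, ← map_add, Prod.mk_add_mk, add_zero, zero_add]
    show G K A (F K A (RingQuot.mkAlgHom K (AssRel K A) (TensorAlgebra.ι K ((a, b) : A × A)))) =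
      RingQuot.mkAlgHom K (AssRel K A) (TensorAlgebra.ι K ((a, b) : A × A))
    rw [hp, map_add, map_add, F_l, F_r, map_add, G_l, G_r]
  refine ⟨AlgEquiv.ofAlgHom (F K A) (G K A) hFG hGF, fun a => F_l K A a, fun b => F_r K A b⟩

end
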